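/- Let Λ be a finite-dimensional algebra, M, N modules such that (Fac M, M^⊥) is a torsion pair, and set C = Fac M ∩ Sub N. Let 0 → I^N → N → V^N → 0 be the canonical sequence with I^N ∈ Fac M the maximal torsion submodule of N and V^N ∈ M^⊥. Then the smallest torsion-free class containing C equals the smallest torsion-free class containing I^N, i.e. F(C) = F(I^N). -/

import Mathlib

/- Common definitions: subcategories of the module category of a
finite-dimensional algebra, torsion theory, approximations,
(support τ-tilting)-style notions, etc. -/

universe u

variable (R : Type u) [Ring R]

/-- Closed under quotients (epimorphic images). -/
def QuotClosed (C : Set (ModuleCat.{u} R)) : Prop :=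
  ∀ (X Y : ModuleCat.{u} R) (f : X →ₗ[R] Y), Function.Surjective f → X ∈ C → Y ∈ C

/-- Closed under submodules. -/
def SubClosed (C : Set (ModuleCat.{u} R)) : Prop :=
  ∀ (X Y : ModuleCat.{u} R) (f : X →ₗ[R] Y), Function.Injective f → Y ∈ C → X ∈ C

/-- Closed under extensions: for a short exact sequence 0 → A → B → X → 0
with A, X ∈ C, also B ∈ C. -/
def ExtClosed (C : Set (ModuleCat.{u} R)) : Prop :=
  ∀ (A B X : ModuleCat.{u} R) (f : A →ₗ[R] B) (g : B →ₗ[R] X),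
    Function.Injective f → Function.Surjective g →
    LinearMap.range f = LinearMap.ker g → A ∈ C → X ∈ C → B ∈ C

/-- Closed under isomorphisms. -/
def IsoClosed (C : Set (ModuleCat.{u} R)) : Prop :=
  ∀ (X Y : ModuleCat.{u} R), (X ≃ₗ[R] Y) → X ∈ C → Y ∈ C

/-- Closed under images of morphisms between objects of C. -/
def ImageClosed (C : Set (ModuleCat.{u} R)) : Prop :=
  ∀ (X Y : ModuleCat.{u} R) (f : X →ₗ[R] Y), X ∈ C → Y ∈ C →
    ModuleCat.of R (LinearMap.range f) ∈ C

def IsTorsionClass (C : Set (ModuleCat.{u} R)) : Prop := QuotClosed R C ∧ ExtClosed R C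

def IsTorsionFreeClass (C : Set (ModuleCat.{u} R)) : Prop := SubClosed R C ∧ ExtClosed R C

/-- IE-closed: closed under (isomorphisms,) images and extensions. -/
def IsIEClosed (C : Set (ModuleCat.{u} R)) : Prop :=
  IsoClosed R C ∧ ImageClosed R C ∧ ExtClosed R C

/-- The smallest torsion class containing `C`. -/
def Tcl (C : Set (ModuleCat.{u} R)) : Set (ModuleCat.{u} R) :=
  ⋂₀ {T | IsTorsionClass R T ∧ C ⊆ T}

/-- The smallest torsion-free class containing `C`. -/
def Fcl (C : Set (ModuleCat.{u} R)) : Set (ModuleCat.{u} R) :=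
  ⋂₀ {F | IsTorsionFreeClass R F ∧ C ⊆ F}

/-- `Fac M`: quotients of finite direct sums of copies of `M`. -/
def FacSet (M : ModuleCat.{u} R) : Set (ModuleCat.{u} R) :=
  {X | ∃ (n : ℕ) (f : (Fin n → M) →ₗ[R] X), Function.Surjective f}

/-- `Sub N`: submodules of finite direct sums of copies of `N`. -/
def SubSet (N : ModuleCat.{u} R) : Set (ModuleCat.{u} R) :=
  {X | ∃ (n : ℕ) (f : X →ₗ[R] (Fin n → N)), Function.Injective f}

/-- Left perpendicular of a class: modules with no nonzero map to any member. -/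
def PerpL (S : Set (ModuleCat.{u} R)) : Set (ModuleCat.{u} R) :=
  {X | ∀ Y ∈ S, ∀ f : X →ₗ[R] Y, f = 0}

/-- `M^⊥`: modules receiving no nonzero map from `M`. -/
def PerpOfMod (M : ModuleCat.{u} R) : Set (ModuleCat.{u} R) :=
  {Y | ∀ f : M →ₗ[R] Y, f = 0}

/-- `g : F → M` is a right `C`-approximation of `M`. -/
def IsRightApprox (C : Set (ModuleCat.{u} R)) (F M : ModuleCat.{u} R) (g : F →ₗ[R] M) : Prop :=
  F ∈ C ∧ ∀ X ∈ C, ∀ a : X →ₗ[R] M, ∃ b : X →ₗ[R] F, g.comp b = a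

/-- `g : M → F` is a left `C`-approximation of `M`. -/
def IsLeftApprox (C : Set (ModuleCat.{u} R)) (M F : ModuleCat.{u} R) (g : M →ₗ[R] F) : Prop :=
  F ∈ C ∧ ∀ X ∈ C, ∀ a : M →ₗ[R] X, ∃ b : F →ₗ[R] X, b.comp g = a

def ContravariantlyFinite (C : Set (ModuleCat.{u} R)) : Prop :=
  ∀ M : ModuleCat.{u} R, ∃ (F : ModuleCat.{u} R) (g : F →ₗ[R] M), IsRightApprox R C F M g

def CovariantlyFinite (C : Set (ModuleCat.{u} R)) : Prop :=
  ∀ M : ModuleCat.{u} R, ∃ (F : ModuleCat.{u} R) (g : M →ₗ[R] F), IsLeftApprox R C M F g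

def FunctoriallyFinite (C : Set (ModuleCat.{u} R)) : Prop :=
  CovariantlyFinite R C ∧ ContravariantlyFinite R C

/-- `X` is a direct summand (retract) of `Y`. -/
def IsRetract (X Y : ModuleCat.{u} R) : Prop :=
  ∃ (i : X →ₗ[R] Y) (p : Y →ₗ[R] X), p.comp i = LinearMap.id

/-- `M` is basic (multiplicity-free): complementary summands share no nonzero
common direct summand. -/
def Basic (M : ModuleCat.{u} R) : Prop :=
  ∀ (A B : ModuleCat.{u} R), (M ≃ₗ[R] (A × B)) →
    ∀ X : ModuleCat.{u} R, IsRetract R X A → IsRetract R X B → Subsingleton X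

/-- `add` of a class: direct summands of finite direct sums of members. -/
def AddSet (S : Set (ModuleCat.{u} R)) : Set (ModuleCat.{u} R) :=
  {X | ∃ (n : ℕ) (f : Fin n → ModuleCat.{u} R), (∀ i, f i ∈ S) ∧
    IsRetract R X (ModuleCat.of R ((i : Fin n) → (f i)))}

/-- `P` is Ext-projective relative to `C`: every short exact sequence
`0 → K → E → P → 0` with `K ∈ C` splits (i.e. `Ext¹(P, C) = 0`). -/
def ExtProjIn (C : Set (ModuleCat.{u} R)) (P : ModuleCat.{u} R) : Prop :=
  ∀ (E : ModuleCat.{u} R) (g : E →ₗ[R] P), Function.Surjective g →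
    ModuleCat.of R (LinearMap.ker g) ∈ C → ∃ s : P →ₗ[R] E, g.comp s = LinearMap.id

/-- `I` is Ext-injective relative to `C`: every short exact sequence
`0 → I → E → Q → 0` with `Q ∈ C` splits (i.e. `Ext¹(C, I) = 0`). -/
def ExtInjIn (C : Set (ModuleCat.{u} R)) (I : ModuleCat.{u} R) : Prop :=
  ∀ (E : ModuleCat.{u} R) (f : I →ₗ[R] E), Function.Injective f →
    ModuleCat.of R (E ⧸ LinearMap.range f) ∈ C → ∃ r : E →ₗ[R] I, r.comp f = LinearMap.id

/-- Support τ-tilting module, via the Adachi–Iyama–Reiten characterization: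
`Fac M` is a functorially finite torsion class and `add M` consists exactly of
the Ext-projective objects of `Fac M`. -/
def IsSupportTauTilting (M : ModuleCat.{u} R) : Prop :=
  IsTorsionClass R (FacSet R M) ∧ FunctoriallyFinite R (FacSet R M) ∧
  ExtProjIn R (FacSet R M) M ∧
  ∀ P : ModuleCat.{u} R, P ∈ FacSet R M → ExtProjIn R (FacSet R M) P → P ∈ AddSet R {M}

/-- Support τ⁻-tilting module (dual characterization). -/
def IsSupportTauMinusTilting (N : ModuleCat.{u} R) : Prop :=
  IsTorsionFreeClass R (SubSet R N) ∧ FunctoriallyFinite R (SubSet R N) ∧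
  ExtInjIn R (SubSet R N) N ∧
  ∀ I : ModuleCat.{u} R, I ∈ SubSet R N → ExtInjIn R (SubSet R N) I → I ∈ AddSet R {N}

/-- Canonical twin support τ-tilting module. -/
def IsCanonicalPair (M N : ModuleCat.{u} R) : Prop :=
  IsSupportTauTilting R M ∧ Basic R M ∧ IsSupportTauMinusTilting R N ∧ Basic R N ∧
  FacSet R M = Tcl R (FacSet R M ∩ SubSet R N) ∧
  SubSet R N = Fcl R (FacSet R M ∩ SubSet R N)

/-- `Cok(C)`: cokernels of morphisms between objects of `C`. -/
def CokSet (C : Set (ModuleCat.{u} R)) : Set (ModuleCat.{u} R) :=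
  {Z | ∃ X ∈ C, ∃ Y ∈ C, ∃ (f : X →ₗ[R] Y) (g : Y →ₗ[R] Z),
    Function.Surjective g ∧ LinearMap.range f = LinearMap.ker g}

def IsICEClosed (C : Set (ModuleCat.{u} R)) : Prop :=
  IsIEClosed R C ∧ CokSet R C ⊆ C

/-- Support of a module with respect to a family of (indecomposable projective)
modules `P i`. -/
def SuppM {ι : Type u} (P : ι → ModuleCat.{u} R) (X : ModuleCat.{u} R) : Set ι :=
  {i | ∃ f : (P i) →ₗ[R] X, f ≠ 0}

/-- Support of a subcategory. -/
def SuppC {ι : Type u} (P : ι → ModuleCat.{u} R) (C : Set (ModuleCat.{u} R)) : Set ι :=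
  ⋃ X ∈ C, SuppM R P X

/-- Right perpendicular of a class: modules receiving no nonzero map from any member. -/
def PerpR (S : Set (ModuleCat.{u} R)) : Set (ModuleCat.{u} R) :=
  {Y | ∀ X ∈ S, ∀ f : X →ₗ[R] Y, f = 0}

/-- Torsion pair. -/
def IsTorsionPair (T F : Set (ModuleCat.{u} R)) : Prop :=
  IsTorsionClass R T ∧ IsTorsionFreeClass R F ∧ F = PerpR R T ∧ T = PerpL R F

lemma Fcl_isTFC (S : Set (ModuleCat.{u} R)) : IsTorsionFreeClass R (Fcl R S) := by
  constructor
  · intro X Y f hf hY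
    intro F hF
    exact hF.1.1 X Y f hf (hY F hF)
  · intro A B X f g hf hg hr hA hX
    intro F hF
    exact hF.1.2 A B X f g hf hg hr (hA F hF) (hX F hF)

lemma subset_Fcl (S : Set (ModuleCat.{u} R)) : S ⊆ Fcl R S :=
  fun _X hX _F hF => hF.2 hX

lemma Fcl_le {S F : Set (ModuleCat.{u} R)} (hF : IsTorsionFreeClass R F) (h : S ⊆ F) :
    Fcl R S ⊆ F := fun _X hX => hX F ⟨hF, h⟩

lemma pi_mem_of_TFC {F : Set (ModuleCat.{u} R)} (hF : IsTorsionFreeClass R F)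
    (A : ModuleCat.{u} R) (hA : A ∈ F) (n : ℕ) :
    ModuleCat.of R (Fin n → A) ∈ F := by
  induction n with
  | zero =>
    exact hF.1 (ModuleCat.of R (Fin 0 → A)) A 0
      (fun a b _ => Subsingleton.elim a b) hA
  | succ n ih =>
    refine hF.2 A (ModuleCat.of R (Fin (n + 1) → A)) (ModuleCat.of R (Fin n → A))
      (LinearMap.single R (fun _ : Fin (n + 1) => A) (Fin.last n))
      (LinearMap.funLeft R A Fin.castSucc) ?_ ?_ ?_ hA ih
    · intro a b h
      have h2 := congrFun h (Fin.last n)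
      change Pi.single (M := fun _ : Fin (n + 1) => (A : Type u)) (Fin.last n) a (Fin.last n)
        = Pi.single (M := fun _ : Fin (n + 1) => (A : Type u)) (Fin.last n) b (Fin.last n) at h2
      simpa using h2
    · intro v
      refine ⟨Fin.snoc v 0, funext fun j => ?_⟩
      change Fin.snoc (α := fun _ : Fin (n + 1) => (A : Type u)) v 0 (Fin.castSucc j) = v j
      simp
    · ext w
      constructor
      · rintro ⟨a, rfl⟩
        funext j
        change Pi.single (M := fun _ : Fin (n + 1) => (A : Type u)) (Fin.last n) a
          (Fin.castSucc j) = (0 : A)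
        simp [Pi.single_eq_of_ne (Fin.castSucc_lt_last j).ne]
      · intro hw
        refine ⟨w (Fin.last n), funext fun j => ?_⟩
        refine Fin.lastCases ?_ (fun k => ?_) j
        · change Pi.single (M := fun _ : Fin (n + 1) => (A : Type u)) (Fin.last n)
            (w (Fin.last n)) (Fin.last n) = w (Fin.last n)
          simp
        · have hk : w (Fin.castSucc k) = 0 :=
            congrFun (LinearMap.mem_ker.mp hw) k
          change Pi.single (M := fun _ : Fin (n + 1) => (A : Type u)) (Fin.last n)
            (w (Fin.last n)) (Fin.castSucc k) = w (Fin.castSucc k)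
          simp [Pi.single_eq_of_ne (Fin.castSucc_lt_last k).ne, hk]

/-- with `(Fac M, M^⊥)` a torsion pair, `C = Fac M ∩ Sub N` and the
canonical sequence `0 → I^N → N → V^N → 0`, one has `F(C) = F(I^N)`. -/
theorem stmt5 (k : Type u) [Field k] [Algebra k R] [FiniteDimensional k R]
    (M N IN VN : ModuleCat.{u} R)
    (htp : IsTorsionPair R (FacSet R M) (PerpOfMod R M))
    (i : IN →ₗ[R] N) (p : N →ₗ[R] VN)
    (hi : Function.Injective i) (hp : Function.Surjective p)
    (hex : LinearMap.range i = LinearMap.ker p)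
    (hIN : IN ∈ FacSet R M) (hVN : VN ∈ PerpOfMod R M) :
    Fcl R (FacSet R M ∩ SubSet R N) = Fcl R {IN} := by
  have hTFC : IsTorsionFreeClass R (Fcl R {IN}) := Fcl_isTFC R {IN}
  have hINmem : IN ∈ Fcl R {IN} := subset_Fcl R {IN} rfl
  apply Set.Subset.antisymm
  · -- Fcl C ⊆ Fcl {IN}
    refine Fcl_le R hTFC ?_
    rintro X ⟨hXM, n, f, hf⟩
    -- X ∈ Fac M, so every map X → VN is zero
    have hXperp : X ∈ PerpL R (PerpOfMod R M) := htp.2.2.2 ▸ hXM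
    -- each component of f lands in range i = ker p
    have hmem : ∀ (j : Fin n) (x : X), f x j ∈ LinearMap.range i := by
      intro j x
      rw [hex, LinearMap.mem_ker]
      have hz : p.comp ((LinearMap.proj j).comp f) = 0 := hXperp VN hVN _
      have := LinearMap.congr_fun hz x
      simpa using this
    -- build an embedding X → (Fin n → IN)
    let e : IN ≃ₗ[R] LinearMap.range i := LinearEquiv.ofInjective i hi
    let d : (j : Fin n) → X →ₗ[R] IN := fun j =>
      e.symm.toLinearMap.comp
        (((LinearMap.proj j).comp f).codRestrict (LinearMap.range i) (hmem j))
    let g : X →ₗ[R] (ModuleCat.of R (Fin n → IN)) := LinearMap.pi d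
    have hg : Function.Injective g := by
      intro x y h
      apply hf
      funext j
      have hd : d j x = d j y := congrFun h j
      have h2 : (((LinearMap.proj j).comp f).codRestrict (LinearMap.range i) (hmem j)) x =
          (((LinearMap.proj j).comp f).codRestrict (LinearMap.range i) (hmem j)) y :=
        e.symm.injective hd
      exact congrArg Subtype.val h2
    exact hTFC.1 X (ModuleCat.of R (Fin n → IN)) g hg
      (pi_mem_of_TFC R hTFC IN hINmem n)
  · -- Fcl {IN} ⊆ Fcl C since IN ∈ C
    refine Fcl_le R (Fcl_isTFC R _) ?_
    rintro X rfl
    exact subset_Fcl R _ ⟨hIN, 1, LinearMap.pi fun _ => i,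
      fun a b h => hi (congrFun h 0)⟩
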